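/- Let E₀, E₁, E₂, E₃ be finite-dimensional complex inner product spaces, φ₁ : E₁ → E₀, φ₂ : E₂ → E₁, φ₃ : E₃ → E₂ linear maps, w ∈ ℂ, and s ∈ {1, −1}. Define η : E₂ × E₁ → E₁ × E₀ by η(ξ₁, ξ₂) = (φ₂ ξ₁ + s·w·ξ₂, φ₁ ξ₂) and η' : E₃ × E₂ → E₂ × E₁ by η'(ξ₁, ξ₂) = (φ₃ ξ₁ − s·w·ξ₂, φ₂ ξ₂). Assume that A := φ₂† φ₂ + φ₃ φ₃† + |w|²·id (an endomorphism of E₂) and B' := φ₂ φ₂† + φ₁† φ₁ + |w|²·id (an endomorphism of E₁) are invertible. Then η' ∘ η'† + η† ∘ η is invertible, and the map σ := (η' ∘ η'† + η† ∘ η)⁻¹ ∘ η† : E₁ × E₀ → E₂ × E₁ satisfies σ(0, ζ) = (0, (B')⁻¹(φ₁† ζ)) for every ζ ∈ E₀; in particular the component of σ mapping E₀ to E₂ is zero. -/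

import Mathlib

noncomputable section

variable {E₀ E₁ E₂ E₃ : Type*}
  [NormedAddCommGroup E₀] [InnerProductSpace ℂ E₀] [FiniteDimensional ℂ E₀]
  [NormedAddCommGroup E₁] [InnerProductSpace ℂ E₁] [FiniteDimensional ℂ E₁]
  [NormedAddCommGroup E₂] [InnerProductSpace ℂ E₂] [FiniteDimensional ℂ E₂]
  [NormedAddCommGroup E₃] [InnerProductSpace ℂ E₃] [FiniteDimensional ℂ E₃]

/-- The differential `(ξ₁, ξ₂) ↦ (φ' ξ₁ + s·w·ξ₂, φ ξ₂)` of the tensor product of a complex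
with the Koszul complex of a single function `w`, regarded as a map between the orthogonal
(`L²`) direct sums. -/
def koszulTensorDiff (φ : E₁ →ₗ[ℂ] E₀) (φ' : E₂ →ₗ[ℂ] E₁) (s w : ℂ) :
    WithLp 2 (E₂ × E₁) →ₗ[ℂ] WithLp 2 (E₁ × E₀) :=
  (WithLp.linearEquiv 2 ℂ (E₁ × E₀)).symm.toLinearMap ∘ₗ
    LinearMap.prod (φ' ∘ₗ LinearMap.fst ℂ E₂ E₁ + (s * w) • LinearMap.snd ℂ E₂ E₁)
      (φ ∘ₗ LinearMap.snd ℂ E₂ E₁) ∘ₗ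
    (WithLp.linearEquiv 2 ℂ (E₂ × E₁)).toLinearMap

/-- For `η(ξ₁, ξ₂) = (φ₂ ξ₁ + s·w·ξ₂, φ₁ ξ₂)` and `η'(ξ₁, ξ₂) = (φ₃ ξ₁ - s·w·ξ₂, φ₂ ξ₂)`,
if `A := φ₂† φ₂ + φ₃ φ₃† + |w|² id` and `B' := φ₂ φ₂† + φ₁† φ₁ + |w|² id` are invertible,
then `η' ∘ η'† + η† ∘ η` is invertible and `σ := (η' ∘ η'† + η† ∘ η)⁻¹ ∘ η†` satisfies
`σ(0, ζ) = (0, B'⁻¹(φ₁† ζ))`; in particular the component `E₀ → E₂` of `σ` vanishes. -/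

lemma koszulTensorDiff_adjoint (φ : E₁ →ₗ[ℂ] E₀) (φ' : E₂ →ₗ[ℂ] E₁) (s w : ℂ) :
    LinearMap.adjoint (koszulTensorDiff φ φ' s w) =
    (WithLp.linearEquiv 2 ℂ (E₂ × E₁)).symm.toLinearMap ∘ₗ
      LinearMap.prod (LinearMap.adjoint φ' ∘ₗ LinearMap.fst ℂ E₁ E₀)
        ((starRingEnd ℂ) (s * w) • LinearMap.fst ℂ E₁ E₀ +
          LinearMap.adjoint φ ∘ₗ LinearMap.snd ℂ E₁ E₀) ∘ₗ
      (WithLp.linearEquiv 2 ℂ (E₁ × E₀)).toLinearMap := by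
  symm
  rw [LinearMap.eq_adjoint_iff]
  intro x y
  simp [koszulTensorDiff, WithLp.prod_inner_apply, inner_add_left, inner_add_right,
    inner_smul_left, inner_smul_right, LinearMap.adjoint_inner_left]
  ring

lemma koszul_block_diag (φ₁ : E₁ →ₗ[ℂ] E₀) (φ₂ : E₂ →ₗ[ℂ] E₁) (φ₃ : E₃ →ₗ[ℂ] E₂)
    (w : ℂ) (s : ℂ) (hs : s = 1 ∨ s = -1) :
    (koszulTensorDiff φ₂ φ₃ (-s) w ∘ₗ LinearMap.adjoint (koszulTensorDiff φ₂ φ₃ (-s) w) +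
      LinearMap.adjoint (koszulTensorDiff φ₁ φ₂ s w) ∘ₗ koszulTensorDiff φ₁ φ₂ s w) =
    (WithLp.linearEquiv 2 ℂ (E₂ × E₁)).symm.toLinearMap ∘ₗ
      LinearMap.prod
        ((LinearMap.adjoint φ₂ ∘ₗ φ₂ + φ₃ ∘ₗ LinearMap.adjoint φ₃ +
          ((‖w‖ : ℂ) ^ 2) • LinearMap.id) ∘ₗ LinearMap.fst ℂ E₂ E₁)
        ((φ₂ ∘ₗ LinearMap.adjoint φ₂ + LinearMap.adjoint φ₁ ∘ₗ φ₁ +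
          ((‖w‖ : ℂ) ^ 2) • LinearMap.id) ∘ₗ LinearMap.snd ℂ E₂ E₁) ∘ₗ
      (WithLp.linearEquiv 2 ℂ (E₂ × E₁)).toLinearMap := by
  apply LinearMap.ext
  intro x
  simp only [koszulTensorDiff_adjoint]
  rcases hs with h | h <;> subst h <;>
    · refine WithLp.ofLp_injective 2 (Prod.ext ?_ ?_) <;>
      · simp [koszulTensorDiff, WithLp.linearEquiv, smul_smul, Complex.conj_mul',
          Complex.mul_conj', smul_add]
        module

theorem koszul_tensor_minimal_inverse_lower_triangular
    (φ₁ : E₁ →ₗ[ℂ] E₀) (φ₂ : E₂ →ₗ[ℂ] E₁) (φ₃ : E₃ →ₗ[ℂ] E₂)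
    (w : ℂ) (s : ℂ) (hs : s = 1 ∨ s = -1)
    (hA : Function.Bijective
      ((LinearMap.adjoint φ₂ ∘ₗ φ₂ + φ₃ ∘ₗ LinearMap.adjoint φ₃ +
        ((‖w‖ : ℂ) ^ 2) • LinearMap.id : E₂ →ₗ[ℂ] E₂)))
    (B'inv : E₁ →ₗ[ℂ] E₁)
    (hB'l : B'inv ∘ₗ (φ₂ ∘ₗ LinearMap.adjoint φ₂ + LinearMap.adjoint φ₁ ∘ₗ φ₁ +
        ((‖w‖ : ℂ) ^ 2) • LinearMap.id) = LinearMap.id)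
    (hB'r : (φ₂ ∘ₗ LinearMap.adjoint φ₂ + LinearMap.adjoint φ₁ ∘ₗ φ₁ +
        ((‖w‖ : ℂ) ^ 2) • LinearMap.id) ∘ₗ B'inv = LinearMap.id) :
    ∃ Minv : WithLp 2 (E₂ × E₁) →ₗ[ℂ] WithLp 2 (E₂ × E₁),
      Minv ∘ₗ (koszulTensorDiff φ₂ φ₃ (-s) w ∘ₗ
          LinearMap.adjoint (koszulTensorDiff φ₂ φ₃ (-s) w) +
        LinearMap.adjoint (koszulTensorDiff φ₁ φ₂ s w) ∘ₗ koszulTensorDiff φ₁ φ₂ s w) =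
        LinearMap.id ∧
      (koszulTensorDiff φ₂ φ₃ (-s) w ∘ₗ
          LinearMap.adjoint (koszulTensorDiff φ₂ φ₃ (-s) w) +
        LinearMap.adjoint (koszulTensorDiff φ₁ φ₂ s w) ∘ₗ koszulTensorDiff φ₁ φ₂ s w) ∘ₗ
        Minv = LinearMap.id ∧
      ∀ ζ : E₀,
        (Minv ∘ₗ LinearMap.adjoint (koszulTensorDiff φ₁ φ₂ s w))
            ((WithLp.linearEquiv 2 ℂ (E₁ × E₀)).symm (0, ζ)) =
          (WithLp.linearEquiv 2 ℂ (E₂ × E₁)).symm (0, B'inv (LinearMap.adjoint φ₁ ζ)) := by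
  set A : E₂ →ₗ[ℂ] E₂ := (LinearMap.adjoint φ₂ ∘ₗ φ₂ + φ₃ ∘ₗ LinearMap.adjoint φ₃ +
      ((‖w‖ : ℂ) ^ 2) • LinearMap.id) with hAdef
  set B' : E₁ →ₗ[ℂ] E₁ := (φ₂ ∘ₗ LinearMap.adjoint φ₂ + LinearMap.adjoint φ₁ ∘ₗ φ₁ +
      ((‖w‖ : ℂ) ^ 2) • LinearMap.id) with hBdef
  let eA : E₂ ≃ₗ[ℂ] E₂ := LinearEquiv.ofBijective A hA
  have hAl : ∀ y : E₂, eA.symm ((LinearMap.adjoint φ₂ ∘ₗ φ₂ + φ₃ ∘ₗ LinearMap.adjoint φ₃ +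
      ((‖w‖ : ℂ) ^ 2) • LinearMap.id : E₂ →ₗ[ℂ] E₂) y) = y := fun y => eA.symm_apply_apply y
  have hAr : ∀ y : E₂, (LinearMap.adjoint φ₂ ∘ₗ φ₂ + φ₃ ∘ₗ LinearMap.adjoint φ₃ +
      ((‖w‖ : ℂ) ^ 2) • LinearMap.id : E₂ →ₗ[ℂ] E₂) (eA.symm y) = y := fun y => eA.apply_symm_apply y
  have hBl' : ∀ y : E₁, B'inv ((φ₂ ∘ₗ LinearMap.adjoint φ₂ + LinearMap.adjoint φ₁ ∘ₗ φ₁ +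
      ((‖w‖ : ℂ) ^ 2) • LinearMap.id : E₁ →ₗ[ℂ] E₁) y) = y := fun y => LinearMap.ext_iff.mp hB'l y
  have hBr' : ∀ y : E₁, (φ₂ ∘ₗ LinearMap.adjoint φ₂ + LinearMap.adjoint φ₁ ∘ₗ φ₁ +
      ((‖w‖ : ℂ) ^ 2) • LinearMap.id : E₁ →ₗ[ℂ] E₁) (B'inv y) = y := fun y => LinearMap.ext_iff.mp hB'r y
  have hBl : ∀ y : E₁, B'inv (B' y) = y := fun y => LinearMap.ext_iff.mp hB'l y
  have hBr : ∀ y : E₁, B' (B'inv y) = y := fun y => LinearMap.ext_iff.mp hB'r y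
  refine ⟨(WithLp.linearEquiv 2 ℂ (E₂ × E₁)).symm.toLinearMap ∘ₗ
      LinearMap.prod (eA.symm.toLinearMap ∘ₗ LinearMap.fst ℂ E₂ E₁)
        (B'inv ∘ₗ LinearMap.snd ℂ E₂ E₁) ∘ₗ
      (WithLp.linearEquiv 2 ℂ (E₂ × E₁)).toLinearMap, ?_, ?_, ?_⟩
  · rw [koszul_block_diag φ₁ φ₂ φ₃ w s hs]
    apply LinearMap.ext
    intro x
    refine WithLp.ofLp_injective 2 (Prod.ext ?_ ?_) <;> simp only [WithLp.coe_linearEquiv, WithLp.coe_symm_linearEquiv, WithLp.ofLp_toLp, LinearMap.coe_comp, Function.comp_apply, LinearEquiv.coe_coe, LinearMap.coe_mk, AddHom.coe_mk, LinearEquiv.coe_symm_mk, LinearMap.prod_apply, Function.prod_apply, LinearMap.fst_apply, LinearMap.snd_apply, LinearMap.id_apply, WithLp.ofLp_fst, WithLp.ofLp_snd, WithLp.toLp_fst, WithLp.toLp_snd, hAl, hBl']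
  · rw [koszul_block_diag φ₁ φ₂ φ₃ w s hs]
    apply LinearMap.ext
    intro x
    refine WithLp.ofLp_injective 2 (Prod.ext ?_ ?_) <;> simp only [WithLp.coe_linearEquiv, WithLp.coe_symm_linearEquiv, WithLp.ofLp_toLp, LinearMap.coe_comp, Function.comp_apply, LinearEquiv.coe_coe, LinearMap.coe_mk, AddHom.coe_mk, LinearEquiv.coe_symm_mk, LinearMap.prod_apply, Function.prod_apply, LinearMap.fst_apply, LinearMap.snd_apply, LinearMap.id_apply, WithLp.ofLp_fst, WithLp.ofLp_snd, WithLp.toLp_fst, WithLp.toLp_snd, hAr, hBr']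
  · intro ζ
    simp only [koszulTensorDiff_adjoint]
    refine WithLp.ofLp_injective 2 (Prod.ext ?_ ?_) <;> simp [WithLp.linearEquiv]


end
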